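/- For f, g ∈ L^∞(T), if the product T_f T_g of the Toeplitz operators is a Toeplitz operator, then either f̄ ∈ H² or g ∈ H², and in that case T_f T_g = T_{fg}. -/

import Mathlib

open MeasureTheory Complex AddCircle
open scoped ENNReal ComplexConjugate InnerProductSpace

noncomputable section

namespace ToeplitzProj

instance : Fact (0 < 2 * Real.pi) := ⟨by positivity⟩
instance : Fact ((1:ℝ≥0∞) ≤ ⊤) := ⟨le_top⟩

abbrev 𝕋 : Type := AddCircle (2 * Real.pi)
abbrev μT : Measure 𝕋 := haarAddCircle
abbrev L2 : Type := Lp ℂ 2 μT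
abbrev Linf : Type := Lp ℂ ⊤ μT

/-- The rank-one operator `f ⊗ g`, acting by `h ↦ ⟨h, g⟩ f = ⟪g, h⟫ • f`. -/
def rankOne {H : Type*} [NormedAddCommGroup H] [InnerProductSpace ℂ H] (f g : H) :
    H →L[ℂ] H := (innerSL ℂ g).smulRight f

theorem memLp_conj (h : L2) : MemLp (fun x => conj ((h : 𝕋 → ℂ) x)) 2 μT :=
  ⟨RCLike.continuous_conj.comp_aestronglyMeasurable (Lp.memLp h).1,
    by
      rw [show (fun x => conj ((h : 𝕋 → ℂ) x)) = conj (h : 𝕋 → ℂ) from rfl, eLpNorm_conj]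
      exact (Lp.memLp h).2⟩

/-- Pointwise complex conjugation on `L²`. -/
def conjL2 (h : L2) : L2 := (memLp_conj h).toLp _

theorem memLp_mul (φ : Linf) (f : L2) :
    MemLp ((φ : 𝕋 → ℂ) • (f : 𝕋 → ℂ)) 2 μT :=
  (Lp.memLp f).smul (Lp.memLp φ)

/-- Multiplication by an `L^∞` function, as a bounded operator on `L²`. -/
def mulCLM (φ : Linf) : L2 →L[ℂ] L2 :=
  LinearMap.mkContinuous
    { toFun := fun f => (memLp_mul φ f).toLp _
      map_add' := by
        intro f g
        rw [← MemLp.toLp_add (memLp_mul φ f) (memLp_mul φ g)]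
        apply MemLp.toLp_congr
        filter_upwards [Lp.coeFn_add f g] with x hx
        simp only [Pi.smul_apply, smul_eq_mul, Pi.mul_apply, hx, Pi.add_apply, mul_add]
      map_smul' := by
        intro c f
        show (memLp_mul φ (c • f)).toLp _ = c • (memLp_mul φ f).toLp _
        rw [← MemLp.toLp_const_smul c (memLp_mul φ f)]
        apply MemLp.toLp_congr
        filter_upwards [Lp.coeFn_smul c f] with x hx
        simp only [Pi.smul_apply, smul_eq_mul, Pi.mul_apply, hx]
        ring }
    ‖φ‖
    (by
      intro f
      simp only [LinearMap.coe_mk, AddHom.coe_mk]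
      rw [Lp.norm_toLp]
      have h := eLpNorm_smul_le_mul_eLpNorm (p := ⊤) (q := 2) (r := 2)
        (Lp.memLp f).1 (Lp.memLp φ).1
      calc (eLpNorm ((φ : 𝕋 → ℂ) • (f : 𝕋 → ℂ)) 2 μT).toReal
          ≤ (eLpNorm (φ : 𝕋 → ℂ) ⊤ μT * eLpNorm (f : 𝕋 → ℂ) 2 μT).toReal := by
            exact ENNReal.toReal_mono (by
              exact ENNReal.mul_ne_top (Lp.memLp φ).2.ne (Lp.memLp f).2.ne) h
        _ = ‖φ‖ * ‖f‖ := by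
            rw [ENNReal.toReal_mul, Lp.norm_def, Lp.norm_def])

/-- The Hardy space `H²` as a subspace of `L²`: the functions whose negative Fourier
coefficients vanish. -/
def Hardy : Submodule ℂ L2 where
  carrier := {f : L2 | ∀ n : ℤ, n < 0 → ⟪(fourierLp 2 n : L2), f⟫_ℂ = 0}
  add_mem' := by
    intro a b ha hb n hn
    rw [inner_add_right, ha n hn, hb n hn, add_zero]
  zero_mem' := by
    intro n hn
    exact inner_zero_right _
  smul_mem' := by
    intro c a ha n hn
    rw [inner_smul_right, ha n hn, mul_zero]

theorem isClosed_Hardy : IsClosed (Hardy : Set L2) := by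
  have : (Hardy : Set L2)
      = ⋂ n : ℤ, ⋂ _ : n < 0, {f : L2 | ⟪(fourierLp 2 n : L2), f⟫_ℂ = 0} := by
    ext f
    simp only [Set.mem_iInter, Set.mem_setOf_eq, SetLike.mem_coe]
    exact Iff.rfl
  rw [this]
  exact isClosed_iInter fun n => isClosed_iInter fun _ =>
    isClosed_eq (Continuous.inner continuous_const continuous_id) continuous_const

instance : CompleteSpace Hardy := isClosed_Hardy.completeSpace_coe

/-- Inclusion of the Hardy space into `L²`. -/
def inclH : Hardy →L[ℂ] L2 := Hardy.subtypeL

/-- The Riesz projection `P : L² → H²`. -/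
def projH : L2 →L[ℂ] Hardy := Hardy.orthogonalProjectionOnto

/-- The Riesz projection, viewed as an operator `L² → L²`. -/
def PFull : L2 →L[ℂ] L2 := inclH ∘L projH

/-- The Toeplitz operator `T_φ f = P(φ f)` on the Hardy space. -/
def Toep (φ : Linf) : Hardy →L[ℂ] Hardy := projH ∘L mulCLM φ ∘L inclH

/-- The Hankel operator `H_φ f = (I − P)(φ f)`, mapping `H²` into `L²`. -/
def Hank (φ : Linf) : Hardy →L[ℂ] L2 := (mulCLM φ ∘L inclH) - (inclH ∘L Toep φ)

/-- A continuous map on the circle, as an element of `L^∞`. -/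
def cLinf (g : C(𝕋, ℂ)) : Linf := ContinuousMap.toLp (E := ℂ) ⊤ μT ℂ g

/-- The coordinate function `z = e^{ix}` in `L^∞`. -/
def zL : Linf := cLinf (fourier 1)

/-- The conjugate coordinate function `z̄ = e^{-ix}` in `L^∞`. -/
def zbarL : Linf := cLinf (fourier (-1))

/-- The constant function `c` in `L^∞`. -/
def constL (c : ℂ) : Linf := cLinf (ContinuousMap.const _ c)

/-- An `L^∞` function, viewed as an element of `L²` (the measure is finite). -/
def toL2 (φ : Linf) : L2 :=
  ((Lp.memLp φ).mono_exponent (le_top : (2:ℝ≥0∞) ≤ ⊤)).toLp φ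

/-- The constant function `1`, as an element of the Hardy space. -/
def oneH : Hardy :=
  ⟨(fourierLp 2 0 : L2), fun n hn => orthonormal_fourier.2 (show n ≠ 0 from hn.ne)⟩

/-- The anti-unitary operator `V` on `L²`, `(Vh)(w) = w̄ · conj (h w)`. -/
def Vop (h : L2) : L2 := mulCLM zbarL (conjL2 h)

/-- `φ ∈ L^∞` is an inner function: `φ ∈ H²` and `|φ| = 1` a.e. -/
def IsInnerFn (u : Linf) : Prop :=
  toL2 u ∈ Hardy ∧ ∀ᵐ x ∂μT, ‖(u : 𝕋 → ℂ) x‖ = 1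

/-- `φ ∈ L^∞` is nonconstant (as an a.e. class). -/
def Nonconst (u : Linf) : Prop := ¬ ∃ c : ℂ, (u : 𝕋 → ℂ) =ᵐ[μT] fun _ => c

/-- `Q` is an orthogonal projection: self-adjoint and idempotent. -/
def IsOrthoProj {H : Type*} [NormedAddCommGroup H] [InnerProductSpace ℂ H]
    [CompleteSpace H] (Q : H →L[ℂ] H) : Prop :=
  IsSelfAdjoint Q ∧ Q ∘L Q = Q

theorem memLinf_conj (φ : Linf) : MemLp (fun x => conj ((φ : 𝕋 → ℂ) x)) ⊤ μT :=
  ⟨RCLike.continuous_conj.comp_aestronglyMeasurable (Lp.memLp φ).1,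
    by
      rw [show (fun x => conj ((φ : 𝕋 → ℂ) x)) = conj (φ : 𝕋 → ℂ) from rfl, eLpNorm_conj]
      exact (Lp.memLp φ).2⟩

/-- Pointwise complex conjugation on `L^∞`. -/
def conjLinf (φ : Linf) : Linf := (memLinf_conj φ).toLp _

/-- The pointwise product of two `L^∞` functions. -/
def mulLinf (φ ψ : Linf) : Linf :=
  (((Lp.memLp ψ).smul (Lp.memLp φ)) :
    MemLp ((φ : 𝕋 → ℂ) • (ψ : 𝕋 → ℂ)) ⊤ μT).toLp _

/-- The Hankel operator `H_φ = (I − P) M_φ P`, as an operator on all of `L²`. -/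
def HankFull (φ : Linf) : L2 →L[ℂ] L2 := (1 - PFull) ∘L mulCLM φ ∘L PFull


/-! ### Auxiliary lemmas for the Brown–Halmos product theorem -/

section Aux

local notation "eF" n => (fourierLp 2 n : L2)

lemma L2inner_def (u v : L2) :
    ⟪u, v⟫_ℂ = ∫ t, conj ((u : 𝕋 → ℂ) t) * (v : 𝕋 → ℂ) t ∂μT := by
  rw [MeasureTheory.L2.inner_def]
  simp [RCLike.inner_apply]
  exact integral_congr_ae (Filter.Eventually.of_forall fun t => mul_comm _ _)

lemma mulCLM_ae (φ : Linf) (x : L2) :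
    (mulCLM φ x : 𝕋 → ℂ) =ᵐ[μT] fun t => (φ : 𝕋 → ℂ) t * (x : 𝕋 → ℂ) t := by
  have h : (mulCLM φ x : 𝕋 → ℂ) =ᵐ[μT] (φ : 𝕋 → ℂ) • (x : 𝕋 → ℂ) :=
    MemLp.coeFn_toLp (memLp_mul φ x)
  filter_upwards [h] with t ht
  simpa [Pi.smul_apply, smul_eq_mul] using ht

lemma conjL2_ae (x : L2) :
    (conjL2 x : 𝕋 → ℂ) =ᵐ[μT] fun t => conj ((x : 𝕋 → ℂ) t) :=
  MemLp.coeFn_toLp (memLp_conj x)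

lemma toL2_ae (φ : Linf) : (toL2 φ : 𝕋 → ℂ) =ᵐ[μT] (φ : 𝕋 → ℂ) :=
  MemLp.coeFn_toLp _

lemma conjLinf_ae (φ : Linf) :
    (conjLinf φ : 𝕋 → ℂ) =ᵐ[μT] fun t => conj ((φ : 𝕋 → ℂ) t) :=
  MemLp.coeFn_toLp _

lemma mulLinf_ae (φ ψ : Linf) :
    (mulLinf φ ψ : 𝕋 → ℂ) =ᵐ[μT] fun t => (φ : 𝕋 → ℂ) t * (ψ : 𝕋 → ℂ) t := by
  have h : (mulLinf φ ψ : 𝕋 → ℂ) =ᵐ[μT] (φ : 𝕋 → ℂ) • (ψ : 𝕋 → ℂ) :=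
    MemLp.coeFn_toLp _
  filter_upwards [h] with t ht
  simpa [Pi.smul_apply, smul_eq_mul] using ht

lemma zL_ae : (zL : 𝕋 → ℂ) =ᵐ[μT] fun t => fourier 1 t :=
  ContinuousMap.coeFn_toLp μT _

lemma zbarL_ae : (zbarL : 𝕋 → ℂ) =ᵐ[μT] fun t => fourier (-1) t :=
  ContinuousMap.coeFn_toLp μT _

lemma conj_conjLinf (φ : Linf) : conjLinf (conjLinf φ) = φ := by
  apply Lp.ext
  filter_upwards [conjLinf_ae (conjLinf φ), conjLinf_ae φ] with t h1 h2
  rw [h1, h2]; simp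

lemma inner_mul_left (φ : Linf) (u v : L2) :
    ⟪mulCLM φ u, v⟫_ℂ = ⟪u, mulCLM (conjLinf φ) v⟫_ℂ := by
  rw [L2inner_def, L2inner_def]
  apply integral_congr_ae
  filter_upwards [mulCLM_ae φ u, mulCLM_ae (conjLinf φ) v, conjLinf_ae φ] with t h1 h2 h3
  rw [h1, h2, h3]
  simp only [map_mul]
  ring

lemma inner_mul_right (φ : Linf) (u v : L2) :
    ⟪u, mulCLM φ v⟫_ℂ = ⟪mulCLM (conjLinf φ) u, v⟫_ℂ := by
  rw [inner_mul_left, conj_conjLinf]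

lemma conjLinf_zL : conjLinf zL = zbarL := by
  apply Lp.ext
  filter_upwards [conjLinf_ae zL, zL_ae, zbarL_ae] with t h1 h2 h3
  rw [h1, h2, h3, ← fourier_neg]

lemma conjLinf_zbarL : conjLinf zbarL = zL := by
  rw [← conjLinf_zL, conj_conjLinf]

lemma mulCLM_zL_fourier (n : ℤ) : mulCLM zL (eF n) = (eF (n + 1)) := by
  apply Lp.ext
  filter_upwards [mulCLM_ae zL (eF n), zL_ae, coeFn_fourierLp 2 n,
    coeFn_fourierLp 2 (n + 1)] with t h1 h2 h3 h4
  rw [h1, h2, h3, h4, ← fourier_add, add_comm]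

lemma mulCLM_zbarL_fourier (n : ℤ) : mulCLM zbarL (eF n) = (eF (n - 1)) := by
  apply Lp.ext
  filter_upwards [mulCLM_ae zbarL (eF n), zbarL_ae, coeFn_fourierLp 2 n,
    coeFn_fourierLp 2 (n - 1)] with t h1 h2 h3 h4
  rw [h1, h2, h3, h4]
  rw [show n - 1 = -1 + n by ring, fourier_add]

lemma zbar_phi_z (φ : Linf) (x : L2) :
    mulCLM zbarL (mulCLM φ (mulCLM zL x)) = mulCLM φ x := by
  apply Lp.ext
  filter_upwards [mulCLM_ae zbarL (mulCLM φ (mulCLM zL x)), mulCLM_ae φ (mulCLM zL x),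
    mulCLM_ae zL x, mulCLM_ae φ x, zL_ae, zbarL_ae] with t h1 h2 h3 h4 h5 h6
  rw [h1, h2, h3, h4, h5, h6]
  have : fourier (-1) t * fourier 1 t = 1 := by
    rw [← fourier_add]; norm_num [fourier_zero]
  calc fourier (-1) t * ((φ : 𝕋 → ℂ) t * (fourier 1 t * (x : 𝕋 → ℂ) t))
      = (fourier (-1) t * fourier 1 t) * ((φ : 𝕋 → ℂ) t * (x : 𝕋 → ℂ) t) := by ring
    _ = (φ : 𝕋 → ℂ) t * (x : 𝕋 → ℂ) t := by rw [this, one_mul]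

lemma z_zbar_cancel (x : L2) : mulCLM zL (mulCLM zbarL x) = x := by
  apply Lp.ext
  filter_upwards [mulCLM_ae zL (mulCLM zbarL x), mulCLM_ae zbarL x, zL_ae, zbarL_ae]
    with t h1 h2 h3 h4
  rw [h1, h2, h3, h4]
  have : fourier (1 : ℤ) t * fourier (-1) t = 1 := by
    rw [← fourier_add]; norm_num [fourier_zero]
  calc fourier (1 : ℤ) t * (fourier (-1) t * (x : 𝕋 → ℂ) t)
      = (fourier (1 : ℤ) t * fourier (-1) t) * (x : 𝕋 → ℂ) t := by ring
    _ = (x : 𝕋 → ℂ) t := by rw [this, one_mul]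

lemma mulCLM_comp_eq (φ ψ : Linf) (x : L2) :
    mulCLM (mulLinf φ ψ) x = mulCLM φ (mulCLM ψ x) := by
  apply Lp.ext
  filter_upwards [mulCLM_ae (mulLinf φ ψ) x, mulLinf_ae φ ψ, mulCLM_ae φ (mulCLM ψ x),
    mulCLM_ae ψ x] with t h1 h2 h3 h4
  rw [h1, h2, h3, h4, mul_assoc]

lemma mulCLM_fourier_zero (φ : Linf) : mulCLM φ (eF (0 : ℤ)) = toL2 φ := by
  apply Lp.ext
  filter_upwards [mulCLM_ae φ (eF (0 : ℤ)), coeFn_fourierLp 2 (0 : ℤ), toL2_ae φ]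
    with t h1 h2 h3
  rw [h1, h2, h3, fourier_zero, mul_one]

lemma fourier_mem_Hardy {n : ℤ} (hn : 0 ≤ n) : (eF n) ∈ Hardy := by
  intro m hm
  exact orthonormal_fourier.2 (show m ≠ n by omega)

lemma mulz_mem_Hardy {x : L2} (hx : x ∈ Hardy) : mulCLM zL x ∈ Hardy := by
  intro n hn
  rw [inner_mul_right, conjLinf_zL, mulCLM_zbarL_fourier]
  exact hx (n - 1) (by omega)

lemma inner_projH_right {w : L2} (hw : w ∈ Hardy) (x : L2) :
    ⟪w, (inclH (projH x) : L2)⟫_ℂ = ⟪w, x⟫_ℂ := by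
  have h0 : ⟪x - (inclH (projH x) : L2), w⟫_ℂ = 0 :=
    Submodule.starProjection_inner_eq_zero x w hw
  have h1 : ⟪w, x - (inclH (projH x) : L2)⟫_ℂ = 0 := inner_eq_zero_symm.mp h0
  rw [inner_sub_right, sub_eq_zero] at h1
  exact h1.symm

lemma inner_projH_left {w : L2} (hw : w ∈ Hardy) (x : L2) :
    ⟪(inclH (projH x) : L2), w⟫_ℂ = ⟪x, w⟫_ℂ := by
  have h1 : ⟪x - (inclH (projH x) : L2), w⟫_ℂ = 0 :=
    Submodule.starProjection_inner_eq_zero x w hw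
  rw [inner_sub_left, sub_eq_zero] at h1
  exact h1.symm

lemma projH_eq_self {x : L2} (hx : x ∈ Hardy) : (inclH (projH x) : L2) = x :=
  Submodule.starProjection_eq_self_iff.mpr hx

lemma Toep_coe (φ : Linf) (h : Hardy) :
    (Toep φ h : L2) = (inclH (projH (mulCLM φ (h : L2))) : L2) := rfl

lemma Toep_adjoint (φ : Linf) :
    ContinuousLinearMap.adjoint (Toep φ) = Toep (conjLinf φ) := by
  symm
  rw [ContinuousLinearMap.eq_adjoint_iff]
  intro x y
  rw [Submodule.coe_inner, Submodule.coe_inner, Toep_coe, Toep_coe,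
    inner_projH_left y.2 _, inner_projH_right x.2 _, inner_mul_left, conj_conjLinf]

end Aux
section Aux2

local notation "eF" n => (fourierLp 2 n : L2)

lemma projH_zero_of_orth {x : L2} (hx : ∀ w ∈ Hardy, ⟪w, x⟫_ℂ = 0) : projH x = 0 :=
  Submodule.orthogonalProjectionOnto_apply_of_mem_orthogonal
    ((Submodule.mem_orthogonal _ _).mpr hx)

/-- `T_{z̄} T_φ T_z = T_φ`, pointwise form. -/
lemma Tzbar_T_Tz_apply (φ : Linf) (h : Hardy) :
    Toep zbarL (Toep φ (Toep zL h)) = Toep φ h := by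
  apply Subtype.ext
  have hz : (Toep zL h : L2) = mulCLM zL (h : L2) := by
    rw [Toep_coe]; exact projH_eq_self (mulz_mem_Hardy h.2)
  -- reduce the outer projections
  have key : ∀ y : L2, projH (mulCLM zbarL (inclH (projH y) : L2)) = projH (mulCLM zbarL y) := by
    intro y
    have horth : projH (mulCLM zbarL (y - (inclH (projH y) : L2))) = 0 := by
      apply projH_zero_of_orth
      intro w hw
      rw [inner_mul_right, conjLinf_zbarL]
      exact (inner_eq_zero_symm).mp
        (Submodule.starProjection_inner_eq_zero y _ (mulz_mem_Hardy hw))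
    have := map_sub (mulCLM zbarL) y ((inclH (projH y) : L2))
    have h2 : projH (mulCLM zbarL y) - projH (mulCLM zbarL (inclH (projH y) : L2)) = 0 := by
      rw [← map_sub, ← this, horth]
    rw [sub_eq_zero] at h2
    exact h2.symm
  show (inclH (projH (mulCLM zbarL (Toep φ (Toep zL h) : L2))) : L2) = _
  rw [Toep_coe φ, key, hz, zbar_phi_z]
  rfl

/-- `T_{z̄} T_φ T_z = T_φ`. -/
lemma Tzbar_T_Tz (φ : Linf) : Toep zbarL ∘L (Toep φ ∘L Toep zL) = Toep φ :=
  ContinuousLinearMap.ext fun h => Tzbar_T_Tz_apply φ h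

/-- `S S* = 1 - (1 ⊗ 1)` pointwise. -/
lemma TzTzbar_apply (h : Hardy) :
    Toep zL (Toep zbarL h) = h - ⟪oneH, h⟫_ℂ • oneH := by
  apply Subtype.ext
  set c : ℂ := ⟪(eF (0 : ℤ)), (h : L2)⟫_ℂ with hc
  have hinner : ⟪oneH, h⟫_ℂ = c := by
    rw [Submodule.coe_inner]; rfl
  -- the projection of z̄ h
  have hw : mulCLM zbarL (h : L2) - c • (eF (-1 : ℤ)) ∈ Hardy := by
    intro n hn
    rw [inner_sub_right, inner_smul_right, inner_mul_right, conjLinf_zbarL,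
      mulCLM_zL_fourier]
    rcases eq_or_lt_of_le (show n ≤ -1 by omega) with h1 | h1
    · have : ⟪(eF n), (eF (-1 : ℤ))⟫_ℂ = 1 := by
        rw [h1]
        exact (orthonormal_iff_ite.mp orthonormal_fourier (-1) (-1)).trans (by simp)
      rw [this, h1, mul_one]
      simp [hc]
    · have h2 : ⟪(eF n), (eF (-1 : ℤ))⟫_ℂ = 0 :=
        orthonormal_fourier.2 (show n ≠ -1 by omega)
      rw [h2, h.2 (n + 1) (by omega), mul_zero, sub_zero]
  have hproj : (inclH (projH (mulCLM zbarL (h : L2))) : L2)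
      = mulCLM zbarL (h : L2) - c • (eF (-1 : ℤ)) := by
    apply Submodule.eq_starProjection_of_mem_orthogonal (K := Hardy) hw
    have : mulCLM zbarL (h : L2) - (mulCLM zbarL (h : L2) - c • (eF (-1 : ℤ)))
        = c • (eF (-1 : ℤ)) := by abel
    rw [this]
    apply Submodule.smul_mem
    rw [Submodule.mem_orthogonal]
    intro u hu
    exact inner_eq_zero_symm.mp (hu (-1) (by norm_num))
  show (inclH (projH (mulCLM zL (Toep zbarL h : L2))) : L2) = _
  rw [Toep_coe zbarL, hproj, map_sub, ContinuousLinearMap.map_smul, z_zbar_cancel, mulCLM_zL_fourier]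
  norm_num
  show (inclH (projH (h : L2)) : L2) - c • (inclH (projH (eF (0:ℤ))) : L2)
      = (h : L2) - ⟪(oneH : L2), (h : L2)⟫_ℂ • ((oneH : L2))
  rw [projH_eq_self h.2, projH_eq_self (fourier_mem_Hardy le_rfl)]
  rfl

end Aux2
section Aux3

local notation "eF" n => (fourierLp 2 n : L2)

lemma rankOne_apply {H : Type*} [NormedAddCommGroup H] [InnerProductSpace ℂ H]
    (u v w : H) : rankOne u v w = ⟪v, w⟫_ℂ • u := rfl

/-- The fundamental Brown–Halmos identity:
`T_{z̄} T_f T_g T_z = T_f T_g + (T_{z̄} T_f 1) ⊗ (T_{z̄} T_{ḡ} 1)`. -/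
lemma key_identity (f g : Linf) :
    Toep zbarL ∘L ((Toep f ∘L Toep g) ∘L Toep zL)
      = (Toep f ∘L Toep g) + rankOne (Toep zbarL (Toep f oneH))
          (Toep zbarL (Toep (conjLinf g) oneH)) := by
  apply ContinuousLinearMap.ext
  intro h
  simp only [ContinuousLinearMap.comp_apply, ContinuousLinearMap.add_apply, rankOne_apply]
  have hdecomp : Toep g (Toep zL h)
      = Toep zL (Toep zbarL (Toep g (Toep zL h)))
        + ⟪oneH, Toep g (Toep zL h)⟫_ℂ • oneH := by
    rw [TzTzbar_apply (Toep g (Toep zL h))]; abel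
  rw [hdecomp, map_add, map_add, ContinuousLinearMap.map_smul, ContinuousLinearMap.map_smul]
  congr 1
  · rw [Tzbar_T_Tz_apply g h]
    exact Tzbar_T_Tz_apply f (Toep g h)
  · congr 1
    have h1 : ⟪oneH, Toep g (Toep zL h)⟫_ℂ
        = ⟪Toep (conjLinf g) oneH, Toep zL h⟫_ℂ := by
      rw [← Toep_adjoint g]
      exact (ContinuousLinearMap.adjoint_inner_left (Toep g) (Toep zL h) oneH).symm
    rw [h1, ← conjLinf_zL, ← Toep_adjoint zL]
    exact (ContinuousLinearMap.adjoint_inner_left (Toep zL) h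
      (Toep (conjLinf g) oneH)).symm

lemma inner_fourier_conjL2 (n : ℤ) (x : L2) :
    ⟪(eF n), conjL2 x⟫_ℂ = conj ⟪(eF (-n)), x⟫_ℂ := by
  rw [L2inner_def, L2inner_def, ← integral_conj]
  apply integral_congr_ae
  filter_upwards [coeFn_fourierLp 2 n, coeFn_fourierLp 2 (-n), conjL2_ae x]
    with t h1 h2 h3
  rw [h1, h2, h3]
  simp only [map_mul, RingHomCompTriple.comp_apply, RingHom.id_apply, starRingEnd_self_apply]
  rw [fourier_neg]

lemma toL2_conjLinf (φ : Linf) : toL2 (conjLinf φ) = conjL2 (toL2 φ) := by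
  apply Lp.ext
  filter_upwards [toL2_ae (conjLinf φ), conjLinf_ae φ, conjL2_ae (toL2 φ), toL2_ae φ]
    with t h1 h2 h3 h4
  rw [h1, h2, h3, h4]

/-- If `T_{z̄} T_φ 1 = 0` then `conj φ ∈ H²`. -/
lemma conj_mem_Hardy_of_Tzbar_Toep_zero {φ : Linf}
    (hq : Toep zbarL (Toep φ oneH) = 0) : toL2 (conjLinf φ) ∈ Hardy := by
  have main : ∀ m : ℤ, 1 ≤ m → ⟪(eF m), toL2 φ⟫_ℂ = 0 := by
    intro m hm
    have hk : (0:ℤ) ≤ m - 1 := by omega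
    have h0 : ⟪(eF (m - 1)), (Toep zbarL (Toep φ oneH) : L2)⟫_ℂ = 0 := by
      rw [hq]
      simp
    rw [Toep_coe, inner_projH_right (fourier_mem_Hardy hk), inner_mul_right,
      conjLinf_zbarL, mulCLM_zL_fourier, Toep_coe,
      inner_projH_right (fourier_mem_Hardy (by omega : (0:ℤ) ≤ m - 1 + 1))] at h0
    rw [show (oneH : L2) = (eF (0:ℤ)) from rfl, mulCLM_fourier_zero φ,
      show m - 1 + 1 = m by ring] at h0
    exact h0
  intro n hn
  rw [toL2_conjLinf, inner_fourier_conjL2, main (-n) (by omega), map_zero]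

end Aux3
section Aux4

local notation "eF" n => (fourierLp 2 n : L2)

/-- Parseval-type vanishing: if `w ∈ H²` has vanishing constant coefficient and `x ∈ H²`,
then `⟪conj w, x⟫ = 0`. -/
lemma inner_conjL2_eq_zero {w x : L2} (hw : w ∈ Hardy) (hw0 : ⟪(eF (0:ℤ)), w⟫_ℂ = 0)
    (hx : x ∈ Hardy) : ⟪conjL2 w, x⟫_ℂ = 0 := by
  have hsum := fourierBasis.hasSum_inner_mul_inner (conjL2 w) x
  have hzero : (fun i : ℤ => ⟪conjL2 w, (fourierBasis (T := 2 * Real.pi)) i⟫_ℂ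
      * ⟪(fourierBasis (T := 2 * Real.pi)) i, x⟫_ℂ) = fun _ => 0 := by
    funext i
    rw [coe_fourierBasis]
    rcases lt_or_ge i 0 with hi | hi
    · rw [hx i hi, mul_zero]
    · have h1 : ⟪conjL2 w, (eF i)⟫_ℂ = 0 := by
        rw [← inner_conj_symm, inner_fourier_conjL2]
        rcases eq_or_lt_of_le hi with h2 | h2
        · rw [← h2]
          simp only [neg_zero]
          rw [hw0]
          simp
        · rw [hw (-i) (by omega)]
          simp
      rw [h1, zero_mul]
  rw [hzero] at hsum
  exact (hasSum_zero.unique hsum).symm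

lemma inner_fourier_mul (φ : Linf) (k m : ℤ) :
    ⟪(eF k), mulCLM φ (eF m)⟫_ℂ = ⟪(eF (k - m)), toL2 φ⟫_ℂ := by
  rw [L2inner_def, L2inner_def]
  apply integral_congr_ae
  filter_upwards [coeFn_fourierLp 2 k, coeFn_fourierLp 2 m, coeFn_fourierLp 2 (k - m),
    mulCLM_ae φ (eF m), toL2_ae φ] with t h1 h2 h3 h4 h5
  rw [h1, h3, h4, h2, h5, ← fourier_neg, ← fourier_neg]
  have hfr : fourier (-k) t * fourier m t = fourier (-(k - m)) t := by
    rw [show -(k - m) = m + -k by ring, fourier_add]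
    ring
  calc fourier (-k) t * ((φ : 𝕋 → ℂ) t * fourier m t)
      = (fourier (-k) t * fourier m t) * (φ : 𝕋 → ℂ) t := by ring
    _ = fourier (-(k - m)) t * (φ : 𝕋 → ℂ) t := by rw [hfr]

/-- Multiplication by `g ∈ H^∞` preserves `H²`. -/
lemma mulg_mem_Hardy {g : Linf} (hg : toL2 g ∈ Hardy) {x : L2} (hx : x ∈ Hardy) :
    mulCLM g x ∈ Hardy := by
  intro n hn
  set w : L2 := mulCLM g (eF (-n)) with hwdef
  have hA : ⟪(eF n), mulCLM g x⟫_ℂ = ⟪conjL2 w, x⟫_ℂ := by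
    rw [L2inner_def, L2inner_def]
    apply integral_congr_ae
    filter_upwards [coeFn_fourierLp 2 n, coeFn_fourierLp 2 (-n), mulCLM_ae g x,
      conjL2_ae w, mulCLM_ae g (eF (-n))] with t h1 h2 h3 h4 h5
    rw [h1, h3, h4, h5, h2]
    simp only [map_mul, fourier_neg, starRingEnd_self_apply]
    ring
  have hwH : w ∈ Hardy := by
    intro k hk
    rw [hwdef, inner_fourier_mul]
    exact hg (k - -n) (by omega)
  have hw0 : ⟪(eF (0:ℤ)), w⟫_ℂ = 0 := by
    rw [hwdef, inner_fourier_mul]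
    exact hg (0 - -n) (by omega)
  rw [hA]
  exact inner_conjL2_eq_zero hwH hw0 hx

/-- If `g ∈ H²` (i.e. `g ∈ H^∞`), then `T_f T_g = T_{fg}`. -/
lemma Toep_mul_right (f : Linf) {g : Linf} (hg : toL2 g ∈ Hardy) :
    Toep f ∘L Toep g = Toep (mulLinf f g) := by
  apply ContinuousLinearMap.ext
  intro h
  apply Subtype.ext
  show (inclH (projH (mulCLM f (Toep g h : L2))) : L2)
      = (inclH (projH (mulCLM (mulLinf f g) (h : L2))) : L2)
  have h1 : (Toep g h : L2) = mulCLM g (h : L2) := by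
    rw [Toep_coe]
    exact projH_eq_self (mulg_mem_Hardy hg h.2)
  rw [h1, ← mulCLM_comp_eq]

lemma conjLinf_mulLinf_conj (f g : Linf) :
    conjLinf (mulLinf (conjLinf g) (conjLinf f)) = mulLinf f g := by
  apply Lp.ext
  filter_upwards [conjLinf_ae (mulLinf (conjLinf g) (conjLinf f)),
    mulLinf_ae (conjLinf g) (conjLinf f), conjLinf_ae g, conjLinf_ae f,
    mulLinf_ae f g] with t h1 h2 h3 h4 h5
  rw [h1, h2, h3, h4, h5]
  simp only [map_mul, starRingEnd_self_apply]
  ring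

/-- If `conj f ∈ H²`, then `T_f T_g = T_{fg}`. -/
lemma Toep_mul_left {f : Linf} (hf : toL2 (conjLinf f) ∈ Hardy) (g : Linf) :
    Toep f ∘L Toep g = Toep (mulLinf f g) := by
  have h1 : Toep (conjLinf g) ∘L Toep (conjLinf f)
      = Toep (mulLinf (conjLinf g) (conjLinf f)) := Toep_mul_right _ hf
  have h2 := congrArg (fun A => ContinuousLinearMap.adjoint A) h1
  simp only [ContinuousLinearMap.adjoint_comp, Toep_adjoint] at h2
  rw [conj_conjLinf, conj_conjLinf, conjLinf_mulLinf_conj] at h2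
  exact h2

end Aux4
/-- If `T_f T_g` is a Toeplitz operator (Brown–Halmos: `T_{z̄} A T_z = A`), then `f̄ ∈ H²`
or `g ∈ H²`, and in that case `T_f T_g = T_{fg}`. -/
theorem toeplitz_product_is_toeplitz (f g : Linf)
    (h : Toep zbarL ∘L ((Toep f ∘L Toep g) ∘L Toep zL) = Toep f ∘L Toep g) :
    (toL2 (conjLinf f) ∈ Hardy ∨ toL2 g ∈ Hardy) ∧
      Toep f ∘L Toep g = Toep (mulLinf f g) := by
  have hk := key_identity f g
  rw [h] at hk
  have hr : rankOne (Toep zbarL (Toep f oneH)) (Toep zbarL (Toep (conjLinf g) oneH)) = 0 :=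
    (left_eq_add.mp hk)
  have huv : Toep zbarL (Toep f oneH) = 0 ∨ Toep zbarL (Toep (conjLinf g) oneH) = 0 := by
    by_cases hv : Toep zbarL (Toep (conjLinf g) oneH) = 0
    · exact Or.inr hv
    · left
      have h0 : rankOne (Toep zbarL (Toep f oneH)) (Toep zbarL (Toep (conjLinf g) oneH))
          (Toep zbarL (Toep (conjLinf g) oneH)) = 0 := by rw [hr]; rfl
      rw [rankOne_apply] at h0
      have hvv : ⟪Toep zbarL (Toep (conjLinf g) oneH),
          Toep zbarL (Toep (conjLinf g) oneH)⟫_ℂ ≠ 0 :=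
        fun hc => hv (inner_self_eq_zero.mp hc)
      rcases smul_eq_zero.mp h0 with h1 | h1
      · exact absurd h1 hvv
      · exact h1
  rcases huv with hu | hv
  · have hf : toL2 (conjLinf f) ∈ Hardy := conj_mem_Hardy_of_Tzbar_Toep_zero hu
    exact ⟨Or.inl hf, Toep_mul_left hf g⟩
  · have hg' : toL2 (conjLinf (conjLinf g)) ∈ Hardy := conj_mem_Hardy_of_Tzbar_Toep_zero hv
    rw [conj_conjLinf] at hg'
    exact ⟨Or.inr hg', Toep_mul_right f hg'⟩

end ToeplitzProj
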